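/- arXiv:2601.17250 — 4 statements merged into one kernel-verified Lean document; each statement's English description precedes it below -/
import Mathlib

section
/- Let x, l, u, y, k : [0,T] → ℝ be continuous functions with l ≤ u, and suppose (y, k) solves the Skorokhod problem on [l,u] for x: y_t = x_t + k_t, l_t ≤ y_t ≤ u_t for all t, k = k⁺ − k⁻ with k⁺, k⁻ continuous nondecreasing starting at 0, ∫₀ᵀ (y_t − l_t) dk⁺_t = ∫₀ᵀ (u_t − y_t) dk⁻_t = 0. Then for all t ∈ [0,T], k_t = −max{ (x_0 − u_0)⁺ ∧ inf_{r ∈ [0,t]} (x_r − l_r), sup_{s ∈ [0,t]} [ (x_s − u_s) ∧ inf_{r ∈ [s,t]} (x_r − l_r) ] }. -/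
open MeasureTheory

/-- If a continuous Stieltjes function `f` increases on `[s,t] ⊆ [0,T]`, and a nonnegative
continuous function `g` on `[0,T]` has zero integral against `f.measure`, then there is a
last-increase point `r ∈ [s,t]` with `g r = 0` and `f r = f t`. -/
lemma lastIncrease (T : ℝ) (f : StieltjesFunction ℝ) (hfC : Continuous f) (g : ℝ → ℝ)
    (hg : ContinuousOn g (Set.Icc 0 T)) (hg0 : ∀ ρ ∈ Set.Icc 0 T, 0 ≤ g ρ)
    (hint : ∫ ρ in Set.Icc 0 T, g ρ ∂f.measure = 0)
    (s t : ℝ) (hs : s ∈ Set.Icc 0 T) (ht : t ∈ Set.Icc 0 T) (hst : s ≤ t)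
    (hf : f s < f t) : ∃ r ∈ Set.Icc s t, g r = 0 ∧ f r = f t := by
  -- the set where g ≠ 0 is null
  have hgint : IntegrableOn g (Set.Icc 0 T) f.measure :=
    ContinuousOn.integrableOn_compact isCompact_Icc hg
  have hae : g =ᵐ[f.measure.restrict (Set.Icc 0 T)] 0 := by
    refine (setIntegral_eq_zero_iff_of_nonneg_ae ?_ hgint).1 hint
    filter_upwards [ae_restrict_mem measurableSet_Icc] with ρ hρ using hg0 ρ hρ
  have hnull : f.measure ({ρ | g ρ ≠ 0} ∩ Set.Icc 0 T) = 0 := by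
    have := hae
    rw [Filter.EventuallyEq, ae_iff] at this
    rwa [Measure.restrict_apply' measurableSet_Icc] at this
  -- last increase point
  set S : Set ℝ := {ρ ∈ Set.Icc s t | f ρ < f t} with hS
  have hSne : S.Nonempty := ⟨s, ⟨Set.mem_Icc.2 ⟨le_refl s, hst⟩, hf⟩⟩
  have hSbdd : BddAbove S := ⟨t, fun ρ hρ => hρ.1.2⟩
  set r := sSup S with hr
  have hrmem : r ∈ Set.Icc s t := by
    constructor
    · exact le_csSup hSbdd ⟨Set.mem_Icc.2 ⟨le_refl s, hst⟩, hf⟩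
    · exact csSup_le hSne fun ρ hρ => hρ.1.2
  have hrT : r ∈ Set.Icc 0 T := ⟨le_trans hs.1 hrmem.1, le_trans hrmem.2 ht.2⟩
  -- f r = f t
  have hfr : f r = f t := by
    rcases eq_or_lt_of_le hrmem.2 with h | h
    · rw [h]
    · have hconst : ∀ ρ ∈ Set.Ioc r t, f ρ = f t := by
        intro ρ hρ
        refine le_antisymm (f.mono hρ.2) ?_
        by_contra hlt
        push_neg at hlt
        have : ρ ∈ S := ⟨Set.mem_Icc.2 ⟨le_of_lt (lt_of_le_of_lt hrmem.1 hρ.1), hρ.2⟩, hlt⟩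
        exact absurd (le_csSup hSbdd this) (not_le.2 hρ.1)
      have h1 : Filter.Tendsto f (nhdsWithin r (Set.Ioi r)) (nhds (f r)) :=
        (hfC.tendsto r).mono_left nhdsWithin_le_nhds
      have h2 : Filter.Tendsto f (nhdsWithin r (Set.Ioi r)) (nhds (f t)) := by
        refine Filter.Tendsto.congr' ?_ tendsto_const_nhds
        filter_upwards [Ioc_mem_nhdsGT_of_mem ⟨le_refl r, h⟩] with ρ hρ
        exact (hconst ρ hρ).symm
      exact tendsto_nhds_unique h1 h2
  refine ⟨r, hrmem, ?_, hfr⟩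
  -- g r = 0
  by_contra hgr
  have hgrpos : 0 < g r := lt_of_le_of_ne (hg0 r hrT) (Ne.symm hgr)
  have hev : ∀ᶠ ρ in nhdsWithin r (Set.Icc 0 T), 0 < g ρ :=
    (hg r hrT).eventually (eventually_gt_nhds hgrpos)
  obtain ⟨ε, hε, hball⟩ := Metric.mem_nhdsWithin_iff.1 hev
  obtain ⟨ρ, hρS, hρgt⟩ := exists_lt_of_lt_csSup hSne (show r - ε < r by linarith)
  have hρr : ρ ≤ r := le_csSup hSbdd hρS
  have hsub : Set.Ioc ρ r ⊆ {ρ | g ρ ≠ 0} ∩ Set.Icc 0 T := by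
    intro q hq
    have hqT : q ∈ Set.Icc 0 T :=
      ⟨le_trans hs.1 (le_trans hρS.1.1 (le_of_lt hq.1)), le_trans (le_trans hq.2 hrmem.2) ht.2⟩
    have hqd : dist q r < ε := by
      rw [Real.dist_eq, abs_lt]
      constructor <;> [linarith [hq.1]; linarith [hq.2]]
    exact ⟨ne_of_gt (hball ⟨Metric.mem_ball.2 hqd, hqT⟩), hqT⟩
  have hμ : f.measure (Set.Ioc ρ r) = 0 :=
    measure_mono_null hsub hnull
  rw [f.measure_Ioc] at hμ
  have : f ρ < f r := hfr ▸ hρS.2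
  simp only [ENNReal.ofReal_eq_zero] at hμ
  linarith

/-- Explicit representation of the regulator `k = k⁺ − k⁻` of the deterministic
Skorokhod problem on the time-dependent interval `[l, u]`. -/
theorem stmt_3 (T : ℝ) (hT : 0 ≤ T)
    (x l u y : ℝ → ℝ) (kp km : StieltjesFunction ℝ)
    (hx : ContinuousOn x (Set.Icc 0 T)) (hl : ContinuousOn l (Set.Icc 0 T))
    (hu : ContinuousOn u (Set.Icc 0 T)) (hy : ContinuousOn y (Set.Icc 0 T))
    (hkpC : Continuous kp) (hkmC : Continuous km)
    (hkp0 : kp 0 = 0) (hkm0 : km 0 = 0)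
    (hlu : ∀ t ∈ Set.Icc 0 T, l t ≤ u t)
    (hyx : ∀ t ∈ Set.Icc 0 T, y t = x t + (kp t - km t))
    (hly : ∀ t ∈ Set.Icc 0 T, l t ≤ y t)
    (hyu : ∀ t ∈ Set.Icc 0 T, y t ≤ u t)
    (hflat1 : ∫ t in Set.Icc 0 T, (y t - l t) ∂kp.measure = 0)
    (hflat2 : ∫ t in Set.Icc 0 T, (u t - y t) ∂km.measure = 0) :
    ∀ t ∈ Set.Icc 0 T,
      kp t - km t =
        - max (min (max (x 0 - u 0) 0) (sInf ((fun r => x r - l r) '' Set.Icc 0 t)))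
            (sSup ((fun s => min (x s - u s) (sInf ((fun r => x r - l r) '' Set.Icc s t)))
              '' Set.Icc 0 t)) := by
  intro t ht
  obtain ⟨ht0, htT⟩ := ht
  have htm : t ∈ Set.Icc 0 T := ⟨ht0, htT⟩
  have h0T : (0:ℝ) ∈ Set.Icc 0 T := ⟨le_refl 0, hT⟩
  have hy0 : y 0 = x 0 := by rw [hyx 0 h0T, hkp0, hkm0]; ring
  have hw0 : max (x 0 - u 0) 0 = 0 := by
    have h := hyu 0 h0T
    rw [hy0] at h
    exact max_eq_right (by linarith)
  have hZge : ∀ ρ ∈ Set.Icc 0 T, km ρ - kp ρ ≤ x ρ - l ρ := by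
    intro ρ hρ
    have h1 := hly ρ hρ
    have h2 := hyx ρ hρ
    linarith
  have hZbdd : ∀ s, 0 ≤ s → BddBelow ((fun r => x r - l r) '' Set.Icc s t) := fun s hs0 =>
    (isCompact_Icc.image_of_continuousOn
      ((hx.sub hl).mono (Set.Icc_subset_Icc hs0 htT))).bddBelow
  have hZne : ∀ s, s ∈ Set.Icc 0 t → ((fun r => x r - l r) '' Set.Icc s t).Nonempty :=
    fun s hs => (Set.nonempty_Icc.2 hs.2).image _
  have hBbdd :
      BddAbove ((fun s => min (x s - u s) (sInf ((fun r => x r - l r) '' Set.Icc s t)))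
        '' Set.Icc 0 t) := by
    refine ⟨x t - l t, ?_⟩
    rintro b ⟨s, hs, rfl⟩
    have h1 : sInf ((fun r => x r - l r) '' Set.Icc s t) ≤ x t - l t :=
      csInf_le (hZbdd s hs.1) ⟨t, ⟨hs.2, le_refl t⟩, rfl⟩
    exact le_trans (min_le_right _ _) h1
  suffices h : max (min (max (x 0 - u 0) 0) (sInf ((fun r => x r - l r) '' Set.Icc 0 t)))
      (sSup ((fun s => min (x s - u s) (sInf ((fun r => x r - l r) '' Set.Icc s t)))
        '' Set.Icc 0 t)) = km t - kp t by rw [h]; ring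
  refine le_antisymm (max_le ?_ ?_) ?_
  · -- A ≤ km t - kp t
    rcases lt_or_eq_of_le (kp.mono ht0 : kp 0 ≤ kp t) with h | h
    · obtain ⟨r, hr, hgr, hfr⟩ := lastIncrease T kp hkpC (fun ρ => y ρ - l ρ) (hy.sub hl)
        (fun ρ hρ => sub_nonneg.2 (hly ρ hρ)) hflat1 0 t h0T htm ht0 h
      have hgr' : y r - l r = 0 := hgr
      have hrT : r ∈ Set.Icc 0 T := ⟨hr.1, le_trans hr.2 htT⟩
      have h1 : x r - l r = km r - kp r := by
        have h2 := hyx r hrT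
        linarith
      have h3 : sInf ((fun r => x r - l r) '' Set.Icc 0 t) ≤ x r - l r :=
        csInf_le (hZbdd 0 le_rfl) ⟨r, hr, rfl⟩
      have h4 : km r ≤ km t := km.mono hr.2
      have h5 : kp r = kp t := hfr
      calc min (max (x 0 - u 0) 0) (sInf ((fun r => x r - l r) '' Set.Icc 0 t))
          ≤ sInf ((fun r => x r - l r) '' Set.Icc 0 t) := min_le_right _ _
        _ ≤ x r - l r := h3
        _ ≤ km t - kp t := by linarith
    · have h1 : kp t = 0 := by rw [← h, hkp0]
      have h2 : 0 ≤ km t := hkm0 ▸ km.mono ht0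
      calc min (max (x 0 - u 0) 0) (sInf ((fun r => x r - l r) '' Set.Icc 0 t))
          ≤ max (x 0 - u 0) 0 := min_le_left _ _
        _ = 0 := hw0
        _ ≤ km t - kp t := by linarith
  · -- B ≤ km t - kp t
    refine csSup_le ⟨_, ⟨0, ⟨le_refl 0, ht0⟩, rfl⟩⟩ ?_
    rintro b ⟨s, hs, rfl⟩
    have hsT : s ∈ Set.Icc 0 T := ⟨hs.1, le_trans hs.2 htT⟩
    rcases lt_or_eq_of_le (kp.mono hs.2 : kp s ≤ kp t) with h | h
    · obtain ⟨r, hr, hgr, hfr⟩ := lastIncrease T kp hkpC (fun ρ => y ρ - l ρ) (hy.sub hl)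
        (fun ρ hρ => sub_nonneg.2 (hly ρ hρ)) hflat1 s t hsT htm hs.2 h
      have hgr' : y r - l r = 0 := hgr
      have hrT : r ∈ Set.Icc 0 T := ⟨le_trans hs.1 hr.1, le_trans hr.2 htT⟩
      have h1 : x r - l r = km r - kp r := by
        have h2 := hyx r hrT
        linarith
      have h3 : sInf ((fun r => x r - l r) '' Set.Icc s t) ≤ x r - l r :=
        csInf_le (hZbdd s hsT.1) ⟨r, hr, rfl⟩
      have h4 : km r ≤ km t := km.mono hr.2
      have h5 : kp r = kp t := hfr
      calc min (x s - u s) (sInf ((fun r => x r - l r) '' Set.Icc s t))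
          ≤ sInf ((fun r => x r - l r) '' Set.Icc s t) := min_le_right _ _
        _ ≤ x r - l r := h3
        _ ≤ km t - kp t := by linarith
    · have h1 := hyu s hsT
      have h2 := hyx s hsT
      have h3 : km s ≤ km t := km.mono hs.2
      calc min (x s - u s) (sInf ((fun r => x r - l r) '' Set.Icc s t))
          ≤ x s - u s := min_le_left _ _
        _ ≤ km t - kp t := by linarith
  · -- km t - kp t ≤ max
    rcases lt_or_eq_of_le (km.mono ht0 : km 0 ≤ km t) with h | h
    · obtain ⟨σ, hσ, hgσ, hfσ⟩ := lastIncrease T km hkmC (fun ρ => u ρ - y ρ) (hu.sub hy)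
        (fun ρ hρ => sub_nonneg.2 (hyu ρ hρ)) hflat2 0 t h0T htm ht0 h
      have hgσ' : u σ - y σ = 0 := hgσ
      have hfσ' : km σ = km t := hfσ
      have hσT : σ ∈ Set.Icc 0 T := ⟨hσ.1, le_trans hσ.2 htT⟩
      have hele : km t - kp t ≤
          min (x σ - u σ) (sInf ((fun r => x r - l r) '' Set.Icc σ t)) := by
        refine le_min ?_ ?_
        · have h2 := hyx σ hσT
          have h3 : kp σ ≤ kp t := kp.mono hσ.2
          linarith
        · refine le_csInf ((Set.nonempty_Icc.2 hσ.2).image _) ?_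
          rintro b ⟨ρ, hρ, rfl⟩
          have hρT : ρ ∈ Set.Icc 0 T := ⟨le_trans hσT.1 hρ.1, le_trans hρ.2 htT⟩
          have h1 := hZge ρ hρT
          have h2 : km t ≤ km ρ := by rw [← hfσ']; exact km.mono hρ.1
          have h3 : kp ρ ≤ kp t := kp.mono hρ.2
          exact le_trans (by linarith) h1
      exact le_trans hele (le_trans (le_csSup hBbdd ⟨σ, hσ, rfl⟩) (le_max_right _ _))
    · have hkmt : km t = 0 := by rw [← h, hkm0]
      refine le_trans ?_ (le_max_left _ _)
      rw [hw0]
      refine le_min ?_ ?_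
      · have h1 : 0 ≤ kp t := hkp0 ▸ kp.mono ht0
        linarith
      · refine le_csInf (hZne 0 ⟨le_refl 0, ht0⟩) ?_
        rintro b ⟨ρ, hρ, rfl⟩
        have hρT : ρ ∈ Set.Icc 0 T := ⟨hρ.1, le_trans hρ.2 htT⟩
        have h1 := hZge ρ hρT
        have h2 : 0 ≤ km ρ := hkm0 ▸ km.mono hρ.1
        have h3 : kp ρ ≤ kp t := kp.mono hρ.2
        exact le_trans (by linarith) h1
end

section
/- Let (xⁱ, lⁱ, uⁱ), i = 1,2, be continuous data with lⁱ ≤ uⁱ, and let (yⁱ, kⁱ) be solutions to the corresponding Skorokhod problems on [lⁱ, uⁱ] for xⁱ. Then there exists a constant C > 0 (independent of the data) such that sup_{t∈[0,T]} |k¹_t − k²_t| ≤ C ( sup_{t∈[0,T]} |x¹_t − x²_t| + sup_{t∈[0,T]} max(|l¹_t − l²_t|, |u¹_t − u²_t|) ). -/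
open MeasureTheory

/-- `(y, k⁺ − k⁻)` solves the Skorokhod problem on `[l,u]` for `x` on `[0,T]`. -/
def IsSkorokhodSolution (T : ℝ) (x l u y : ℝ → ℝ) (kp km : StieltjesFunction ℝ) : Prop :=
  ContinuousOn x (Set.Icc 0 T) ∧ ContinuousOn l (Set.Icc 0 T) ∧
  ContinuousOn u (Set.Icc 0 T) ∧ ContinuousOn y (Set.Icc 0 T) ∧
  Continuous kp ∧ Continuous km ∧ kp 0 = 0 ∧ km 0 = 0 ∧
  (∀ t ∈ Set.Icc 0 T, y t = x t + (kp t - km t)) ∧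
  (∀ t ∈ Set.Icc 0 T, l t ≤ y t ∧ y t ≤ u t) ∧
  (∫ t in Set.Icc 0 T, (y t - l t) ∂kp.measure = 0) ∧
  (∫ t in Set.Icc 0 T, (u t - y t) ∂km.measure = 0)

/-- If a nonnegative continuous function has zero integral against a Stieltjes measure
on `[0,T]`, then on any subinterval where it is strictly positive the Stieltjes function
does not increase. -/
lemma stieltjes_le_of_integral_zero {T : ℝ} (f : ℝ → ℝ) (k : StieltjesFunction ℝ)
    (hf : ContinuousOn f (Set.Icc 0 T)) (hnn : ∀ t ∈ Set.Icc 0 T, 0 ≤ f t)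
    (hint : ∫ t in Set.Icc 0 T, f t ∂k.measure = 0)
    {a b : ℝ} (hab : Set.Ioc a b ⊆ Set.Icc 0 T)
    (hpos : ∀ s ∈ Set.Ioc a b, 0 < f s) : k b ≤ k a := by
  have hInt : IntegrableOn f (Set.Icc 0 T) k.measure :=
    hf.integrableOn_compact isCompact_Icc
  have h0 : 0 ≤ᵐ[k.measure.restrict (Set.Icc 0 T)] f :=
    ae_restrict_of_forall_mem measurableSet_Icc hnn
  have hae : f =ᵐ[k.measure.restrict (Set.Icc 0 T)] 0 :=
    (integral_eq_zero_iff_of_nonneg_ae h0 hInt).mp hint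
  have hae' : ∀ᵐ t ∂(k.measure.restrict (Set.Icc 0 T)), f t = 0 := hae
  have hnull : (k.measure.restrict (Set.Icc 0 T)) {t | f t ≠ 0} = 0 := ae_iff.mp hae'
  have hsub : Set.Ioc a b ⊆ {t | f t ≠ 0} := fun s hs => (hpos s hs).ne'
  have h1 : k.measure (Set.Ioc a b) = 0 := by
    have h2 : (k.measure.restrict (Set.Icc 0 T)) (Set.Ioc a b) = 0 :=
      measure_mono_null hsub hnull
    rwa [Measure.restrict_apply measurableSet_Ioc, Set.inter_eq_left.mpr hab] at h2
  have h3 := k.measure_Ioc a b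
  rw [h1] at h3
  have h4 : k b - k a ≤ 0 := ENNReal.ofReal_eq_zero.mp h3.symm
  linarith

/-- One-sided comparison estimate for two Skorokhod solutions. -/
lemma skorokhod_one_side {T : ℝ} (hT : 0 ≤ T)
    (x1 l1 u1 y1 x2 l2 u2 y2 : ℝ → ℝ) (kp1 km1 kp2 km2 : StieltjesFunction ℝ)
    (h1 : IsSkorokhodSolution T x1 l1 u1 y1 kp1 km1)
    (h2 : IsSkorokhodSolution T x2 l2 u2 y2 kp2 km2)
    {Mx Mb : ℝ}
    (hMx : ∀ s ∈ Set.Icc 0 T, |x1 s - x2 s| ≤ Mx)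
    (hMl : ∀ s ∈ Set.Icc 0 T, |l1 s - l2 s| ≤ Mb)
    (hMu : ∀ s ∈ Set.Icc 0 T, |u1 s - u2 s| ≤ Mb)
    {t0 : ℝ} (ht0 : t0 ∈ Set.Icc (0:ℝ) T) :
    y1 t0 - y2 t0 ≤ 3 * Mx + Mb := by
  obtain ⟨hx1c, hl1c, hu1c, hy1c, _, _, hkp10, hkm10, hy1eq, hbd1, hintp1, hintm1⟩ := h1
  obtain ⟨hx2c, hl2c, hu2c, hy2c, _, _, hkp20, hkm20, hy2eq, hbd2, hintp2, hintm2⟩ := h2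
  have h0mem : (0:ℝ) ∈ Set.Icc (0:ℝ) T := ⟨le_refl 0, hT⟩
  have hMx0 : 0 ≤ Mx := le_trans (abs_nonneg _) (hMx 0 h0mem)
  have hMb0 : 0 ≤ Mb := le_trans (abs_nonneg _) (hMl 0 h0mem)
  set a : ℝ := Mx + Mb with ha
  by_cases hcase : y1 t0 - y2 t0 ≤ a
  · linarith
  push_neg at hcase
  -- the last time before t0 at which y1 - y2 ≤ a
  set S : Set ℝ := Set.Icc 0 t0 ∩ (fun s => y1 s - y2 s) ⁻¹' Set.Iic a with hS
  have hdc : ContinuousOn (fun s => y1 s - y2 s) (Set.Icc 0 t0) :=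
    (hy1c.sub hy2c).mono (Set.Icc_subset_Icc_right ht0.2)
  have hSclosed : IsClosed S :=
    hdc.preimage_isClosed_of_isClosed isClosed_Icc isClosed_Iic
  have hScpt : IsCompact S :=
    isCompact_Icc.of_isClosed_subset hSclosed Set.inter_subset_left
  have hd0 : y1 0 - y2 0 = x1 0 - x2 0 := by
    have e1 := hy1eq 0 h0mem
    have e2 := hy2eq 0 h0mem
    rw [hkp10, hkm10] at e1
    rw [hkp20, hkm20] at e2
    linarith
  have hd0le : y1 0 - y2 0 ≤ a := by
    have := abs_le.mp (hMx 0 h0mem)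
    rw [hd0]; linarith [this.2]
  have hSne : S.Nonempty := ⟨0, ⟨⟨le_refl 0, ht0.1⟩, hd0le⟩⟩
  set τ : ℝ := sSup S with hτ
  have hτS : τ ∈ S := hScpt.sSup_mem hSne
  have hτmem : τ ∈ Set.Icc (0:ℝ) T := ⟨hτS.1.1, hτS.1.2.trans ht0.2⟩
  have hτle : τ ≤ t0 := hτS.1.2
  have hdτ : y1 τ - y2 τ ≤ a := hτS.2
  have hbddS : BddAbove S := hScpt.bddAbove
  have hgt : ∀ s ∈ Set.Ioc τ t0, a < y1 s - y2 s := by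
    intro s hs
    by_contra h
    push_neg at h
    have hsS : s ∈ S := ⟨⟨hτS.1.1.trans hs.1.le, hs.2⟩, h⟩
    have := le_csSup hbddS hsS
    exact absurd this (not_le.mpr hs.1)
  have hIocsub : Set.Ioc τ t0 ⊆ Set.Icc (0:ℝ) T :=
    fun s hs => ⟨hτS.1.1.trans hs.1.le, hs.2.trans ht0.2⟩
  -- y1 stays strictly above l1 on (τ, t0]
  have hposl : ∀ s ∈ Set.Ioc τ t0, 0 < y1 s - l1 s := by
    intro s hs
    have hsm := hIocsub hs
    have hd := hgt s hs
    have hl2y := (hbd2 s hsm).1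
    have habs := abs_le.mp (hMl s hsm)
    linarith [habs.1, habs.2]
  -- y2 stays strictly below u2 on (τ, t0]
  have hposu : ∀ s ∈ Set.Ioc τ t0, 0 < u2 s - y2 s := by
    intro s hs
    have hsm := hIocsub hs
    have hd := hgt s hs
    have hyu1 := (hbd1 s hsm).2
    have habs := abs_le.mp (hMu s hsm)
    linarith [habs.1, habs.2]
  have hkp1 : kp1 t0 ≤ kp1 τ :=
    stieltjes_le_of_integral_zero (fun t => y1 t - l1 t) kp1 (hy1c.sub hl1c)
      (fun t ht => sub_nonneg.mpr (hbd1 t ht).1) hintp1 hIocsub hposl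
  have hkm2 : km2 t0 ≤ km2 τ :=
    stieltjes_le_of_integral_zero (fun t => u2 t - y2 t) km2 (hu2c.sub hy2c)
      (fun t ht => sub_nonneg.mpr (hbd2 t ht).2) hintm2 hIocsub hposu
  have hkm1 : km1 τ ≤ km1 t0 := km1.mono hτle
  have hkp2 : kp2 τ ≤ kp2 t0 := kp2.mono hτle
  have e1t := hy1eq t0 ht0
  have e2t := hy2eq t0 ht0
  have e1τ := hy1eq τ hτmem
  have e2τ := hy2eq τ hτmem
  have habst := abs_le.mp (hMx t0 ht0)
  have habsτ := abs_le.mp (hMx τ hτmem)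
  linarith [habst.1, habst.2, habsτ.1, habsτ.2]

/-- Lipschitz stability in supremum norm of the Skorokhod regulator with respect to
the input path and the two barriers. -/
theorem stmt_4 :
    ∃ C > (0:ℝ), ∀ (T : ℝ), 0 ≤ T →
      ∀ (x1 l1 u1 y1 x2 l2 u2 y2 : ℝ → ℝ) (kp1 km1 kp2 km2 : StieltjesFunction ℝ),
      (∀ t ∈ Set.Icc 0 T, l1 t ≤ u1 t) → (∀ t ∈ Set.Icc 0 T, l2 t ≤ u2 t) →
      IsSkorokhodSolution T x1 l1 u1 y1 kp1 km1 →
      IsSkorokhodSolution T x2 l2 u2 y2 kp2 km2 →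
      ∀ t ∈ Set.Icc 0 T,
        |(kp1 t - km1 t) - (kp2 t - km2 t)| ≤
          C * (sSup ((fun s => |x1 s - x2 s|) '' Set.Icc 0 T)
            + sSup ((fun s => max |l1 s - l2 s| |u1 s - u2 s|) '' Set.Icc 0 T)) := by
  refine ⟨4, by norm_num, ?_⟩
  intro T hT x1 l1 u1 y1 x2 l2 u2 y2 kp1 km1 kp2 km2 hlu1 hlu2 h1 h2 t ht
  set Mx := sSup ((fun s => |x1 s - x2 s|) '' Set.Icc 0 T) with hMxdef
  set Mb := sSup ((fun s => max |l1 s - l2 s| |u1 s - u2 s|) '' Set.Icc 0 T) with hMbdef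
  have hbddx : BddAbove ((fun s => |x1 s - x2 s|) '' Set.Icc 0 T) :=
    (isCompact_Icc.image_of_continuousOn ((h1.1.sub h2.1).abs)).bddAbove
  have hbddb : BddAbove ((fun s => max |l1 s - l2 s| |u1 s - u2 s|) '' Set.Icc 0 T) :=
    (isCompact_Icc.image_of_continuousOn
      (((h1.2.1.sub h2.2.1).abs).sup ((h1.2.2.1.sub h2.2.2.1).abs))).bddAbove
  have hMx : ∀ s ∈ Set.Icc 0 T, |x1 s - x2 s| ≤ Mx :=
    fun s hs => le_csSup hbddx (Set.mem_image_of_mem _ hs)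
  have hMb : ∀ s ∈ Set.Icc 0 T, max |l1 s - l2 s| |u1 s - u2 s| ≤ Mb :=
    fun s hs => le_csSup hbddb (Set.mem_image_of_mem _ hs)
  have hMl : ∀ s ∈ Set.Icc 0 T, |l1 s - l2 s| ≤ Mb :=
    fun s hs => le_trans (le_max_left _ _) (hMb s hs)
  have hMu : ∀ s ∈ Set.Icc 0 T, |u1 s - u2 s| ≤ Mb :=
    fun s hs => le_trans (le_max_right _ _) (hMb s hs)
  have hMx' : ∀ s ∈ Set.Icc 0 T, |x2 s - x1 s| ≤ Mx := by
    intro s hs; rw [abs_sub_comm]; exact hMx s hs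
  have hMl' : ∀ s ∈ Set.Icc 0 T, |l2 s - l1 s| ≤ Mb := by
    intro s hs; rw [abs_sub_comm]; exact hMl s hs
  have hMu' : ∀ s ∈ Set.Icc 0 T, |u2 s - u1 s| ≤ Mb := by
    intro s hs; rw [abs_sub_comm]; exact hMu s hs
  have hA := skorokhod_one_side hT x1 l1 u1 y1 x2 l2 u2 y2 kp1 km1 kp2 km2 h1 h2
    hMx hMl hMu ht
  have hB := skorokhod_one_side hT x2 l2 u2 y2 x1 l1 u1 y1 kp2 km2 kp1 km1 h2 h1
    hMx' hMl' hMu' ht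
  have hMx0 : 0 ≤ Mx := le_trans (abs_nonneg _) (hMx t ht)
  have hMb0 : 0 ≤ Mb := le_trans (abs_nonneg _) (hMl t ht)
  have e1 := h1.2.2.2.2.2.2.2.2.1 t ht
  have e2 := h2.2.2.2.2.2.2.2.2.1 t ht
  have habs := abs_le.mp (hMx t ht)
  rw [abs_le]
  constructor <;> linarith [habs.1, habs.2]
end

section
/- Let φ be an admissible family of integrable random variables indexed by stopping times with E[ess sup_θ φ(θ)⁻] < ∞. For each stopping time θ define v(θ) := ess sup_{τ ∈ T_θ} E[φ(τ) | F_θ], where T_θ is the set of stopping times ≥ θ. Then v is a supermartingale family: for stopping times θ' ≤ θ, E[v(θ) | F_{θ'}] ≤ v(θ') almost surely, and v ≥ φ; moreover v is the smallest supermartingale family dominating φ. -/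
open MeasureTheory Filter Topology

/-- The value family `v(θ) = ess sup_{τ ≥ θ} E[φ(τ) | F_θ]` of the optimal stopping
problem is the smallest supermartingale family dominating the reward family `φ`. -/
theorem stmt_8 {Ω : Type*} {mΩ : MeasurableSpace Ω} {μ : Measure Ω} [IsProbabilityMeasure μ]
    {F : Filtration ℝ mΩ} {T : ℝ} (hT : 0 ≤ T)
    -- `ST` : stopping times with values in `[0,T]`
    (φ v : {τ : Ω → ℝ // IsStoppingTime F (fun ω => (τ ω : WithTop ℝ)) ∧ ∀ ω, τ ω ∈ Set.Icc 0 T} → Ω → ℝ)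
    -- `φ` is an admissible, integrable family with `E[ess sup φ⁻] < ∞`
    (hφmeas : ∀ θ, StronglyMeasurable[θ.2.1.measurableSpace] (φ θ))
    (hφint : ∀ θ, Integrable (φ θ) μ)
    (hφadm : ∀ θ θ', ∀ᵐ ω ∂μ, θ.1 ω = θ'.1 ω → φ θ ω = φ θ' ω)
    (hφneg : ∃ g : Ω → ℝ, Integrable g μ ∧ ∀ θ, ∀ᵐ ω ∂μ, max (-(φ θ ω)) 0 ≤ g ω)
    -- `v` is admissible and integrable
    (hvmeas : ∀ θ, StronglyMeasurable[θ.2.1.measurableSpace] (v θ))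
    (hvint : ∀ θ, Integrable (v θ) μ)
    (hvadm : ∀ θ θ', ∀ᵐ ω ∂μ, θ.1 ω = θ'.1 ω → v θ ω = v θ' ω)
    -- `v(θ)` is the essential supremum of `{E[φ(τ)|F_θ] : τ ≥ θ}` : least a.e. upper bound
    (hvub : ∀ θ τ, θ.1 ≤ τ.1 → μ[φ τ | θ.2.1.measurableSpace] ≤ᵐ[μ] v θ)
    (hvlub : ∀ θ (w : Ω → ℝ), StronglyMeasurable[θ.2.1.measurableSpace] w →
      (∀ τ, θ.1 ≤ τ.1 → μ[φ τ | θ.2.1.measurableSpace] ≤ᵐ[μ] w) → v θ ≤ᵐ[μ] w) :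
    -- `v` is a supermartingale family …
    (∀ θ θ', θ'.1 ≤ θ.1 → μ[v θ | θ'.2.1.measurableSpace] ≤ᵐ[μ] v θ') ∧
    -- … which dominates `φ` …
    (∀ θ, φ θ ≤ᵐ[μ] v θ) ∧
    -- … and is the smallest such family.
    (∀ ψ : {τ : Ω → ℝ // IsStoppingTime F (fun ω => (τ ω : WithTop ℝ)) ∧ ∀ ω, τ ω ∈ Set.Icc 0 T} → Ω → ℝ,
      (∀ θ, StronglyMeasurable[θ.2.1.measurableSpace] (ψ θ)) →
      (∀ θ, Integrable (ψ θ) μ) →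
      (∀ θ θ', θ'.1 ≤ θ.1 → μ[ψ θ | θ'.2.1.measurableSpace] ≤ᵐ[μ] ψ θ') →
      (∀ θ, φ θ ≤ᵐ[μ] ψ θ) →
      ∀ θ, v θ ≤ᵐ[μ] ψ θ) := by
  classical
  -- Pasting two stopping times above θ: the conditional expectations are directed.
  have key : ∀ (θ τ₁ τ₂ : {τ : Ω → ℝ // IsStoppingTime F (fun ω => (τ ω : WithTop ℝ)) ∧ ∀ ω, τ ω ∈ Set.Icc 0 T}), θ.1 ≤ τ₁.1 → θ.1 ≤ τ₂.1 → ∃ ρ : {τ : Ω → ℝ // IsStoppingTime F (fun ω => (τ ω : WithTop ℝ)) ∧ ∀ ω, τ ω ∈ Set.Icc 0 T}, θ.1 ≤ ρ.1 ∧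
      (fun ω => max ((μ[φ τ₁ | θ.2.1.measurableSpace]) ω)
        ((μ[φ τ₂ | θ.2.1.measurableSpace]) ω)) =ᵐ[μ] μ[φ ρ | θ.2.1.measurableSpace] := by
    intro θ τ₁ τ₂ h1 h2
    have hm : θ.2.1.measurableSpace ≤ mΩ := θ.2.1.measurableSpace_le
    set g₁ := μ[φ τ₁ | θ.2.1.measurableSpace] with hg₁
    set g₂ := μ[φ τ₂ | θ.2.1.measurableSpace] with hg₂
    have hg₁m : StronglyMeasurable[θ.2.1.measurableSpace] g₁ := stronglyMeasurable_condExp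
    have hg₂m : StronglyMeasurable[θ.2.1.measurableSpace] g₂ := stronglyMeasurable_condExp
    set A : Set Ω := {ω | g₂ ω ≤ g₁ ω} with hA_def
    have hA : MeasurableSet[θ.2.1.measurableSpace] A := measurableSet_le hg₂m.measurable hg₁m.measurable
    have hA' : ∀ t, MeasurableSet[F t] (A ∩ {ω | θ.1 ω ≤ t}) := fun t => by
      simpa only [WithTop.coe_le_coe] using ((θ.2.1.measurableSet A).1 hA).2 t
    have hAc' : ∀ t, MeasurableSet[F t] (Aᶜ ∩ {ω | θ.1 ω ≤ t}) := fun t => by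
      simpa only [WithTop.coe_le_coe] using ((θ.2.1.measurableSet Aᶜ).1 hA.compl).2 t
    have hρst : IsStoppingTime F (fun ω => ((A.piecewise τ₁.1 τ₂.1 ω : ℝ) : WithTop ℝ)) := by
      intro t
      simp only [WithTop.coe_le_coe]
      have hset : {ω | A.piecewise τ₁.1 τ₂.1 ω ≤ t}
          = (A ∩ {ω | τ₁.1 ω ≤ t}) ∪ (Aᶜ ∩ {ω | τ₂.1 ω ≤ t}) := by
        ext ω; by_cases h : ω ∈ A <;> simp [Set.piecewise, h]
      have e1 : A ∩ {ω | τ₁.1 ω ≤ t} = (A ∩ {ω | θ.1 ω ≤ t}) ∩ {ω | τ₁.1 ω ≤ t} := by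
        ext ω
        simp only [Set.mem_inter_iff, Set.mem_setOf_eq]
        exact ⟨fun ⟨ha, hb⟩ => ⟨⟨ha, (h1 ω).trans hb⟩, hb⟩, fun ⟨⟨ha, _⟩, hb⟩ => ⟨ha, hb⟩⟩
      have e2 : Aᶜ ∩ {ω | τ₂.1 ω ≤ t} = (Aᶜ ∩ {ω | θ.1 ω ≤ t}) ∩ {ω | τ₂.1 ω ≤ t} := by
        ext ω
        simp only [Set.mem_inter_iff, Set.mem_setOf_eq]
        exact ⟨fun ⟨ha, hb⟩ => ⟨⟨ha, (h2 ω).trans hb⟩, hb⟩, fun ⟨⟨ha, _⟩, hb⟩ => ⟨ha, hb⟩⟩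
      rw [hset, e1, e2]
      exact ((hA' t).inter (by simpa only [WithTop.coe_le_coe] using τ₁.2.1 t)).union
        ((hAc' t).inter (by simpa only [WithTop.coe_le_coe] using τ₂.2.1 t))
    refine ⟨⟨A.piecewise τ₁.1 τ₂.1, hρst, ?_⟩, ?_, ?_⟩
    · intro ω; by_cases h : ω ∈ A
      · simpa [Set.piecewise, h] using τ₁.2.2 ω
      · simpa [Set.piecewise, h] using τ₂.2.2 ω
    · intro ω; by_cases h : ω ∈ A
      · simpa [Set.piecewise, h] using h1 ω
      · simpa [Set.piecewise, h] using h2 ω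
    · -- conditional expectation of the pasted reward is the max
      set ρ : {τ : Ω → ℝ // IsStoppingTime F (fun ω => (τ ω : WithTop ℝ)) ∧ ∀ ω, τ ω ∈ Set.Icc 0 T} := ⟨A.piecewise τ₁.1 τ₂.1, hρst, by
        intro ω; by_cases h : ω ∈ A
        · simpa [Set.piecewise, h] using τ₁.2.2 ω
        · simpa [Set.piecewise, h] using τ₂.2.2 ω⟩ with hρdef
      have hφρ : φ ρ =ᵐ[μ] A.indicator (φ τ₁) + Aᶜ.indicator (φ τ₂) := by
        filter_upwards [hφadm ρ τ₁, hφadm ρ τ₂] with ω e1 e2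
        by_cases h : ω ∈ A
        · have : ρ.1 ω = τ₁.1 ω := Set.piecewise_eq_of_mem _ _ _ h
          simp [e1 this, Set.indicator, h]
        · have : ρ.1 ω = τ₂.1 ω := Set.piecewise_eq_of_notMem _ _ _ h
          simp [e2 this, Set.indicator, h]
      have hAΩ : MeasurableSet[mΩ] A := hm A hA
      have hAcΩ : MeasurableSet[mΩ] Aᶜ := hm Aᶜ hA.compl
      have hint1 : Integrable (A.indicator (φ τ₁)) μ := (hφint τ₁).indicator hAΩ
      have hint2 : Integrable (Aᶜ.indicator (φ τ₂)) μ := (hφint τ₂).indicator hAcΩ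
      have hc : μ[φ ρ | θ.2.1.measurableSpace] =ᵐ[μ] A.indicator g₁ + Aᶜ.indicator g₂ := by
        calc μ[φ ρ | θ.2.1.measurableSpace] =ᵐ[μ] μ[A.indicator (φ τ₁) + Aᶜ.indicator (φ τ₂) | θ.2.1.measurableSpace] :=
              condExp_congr_ae hφρ
          _ =ᵐ[μ] μ[A.indicator (φ τ₁) | θ.2.1.measurableSpace] + μ[Aᶜ.indicator (φ τ₂) | θ.2.1.measurableSpace] :=
              condExp_add hint1 hint2 _
          _ =ᵐ[μ] A.indicator g₁ + Aᶜ.indicator g₂ :=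
              (condExp_indicator (hφint τ₁) hA).add (condExp_indicator (hφint τ₂) hA.compl)
      have hmax : A.indicator g₁ + Aᶜ.indicator g₂ = fun ω => max (g₁ ω) (g₂ ω) := by
        funext ω; by_cases h : ω ∈ A
        · have hle : g₂ ω ≤ g₁ ω := h
          simp [Set.indicator, h, max_eq_left hle]
        · have hle : g₁ ω ≤ g₂ ω := (not_le.mp h).le
          simp [Set.indicator, h, max_eq_right hle]
      exact (hmax ▸ hc).symm
  -- the supermartingale property
  have hsm : ∀ θ θ' : {τ : Ω → ℝ // IsStoppingTime F (fun ω => (τ ω : WithTop ℝ)) ∧ ∀ ω, τ ω ∈ Set.Icc 0 T}, θ'.1 ≤ θ.1 →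
      μ[v θ | θ'.2.1.measurableSpace] ≤ᵐ[μ] v θ' := by
    intro θ θ' hle
    have hm : θ.2.1.measurableSpace ≤ mΩ := θ.2.1.measurableSpace_le
    have hm' : θ'.2.1.measurableSpace ≤ mΩ := θ'.2.1.measurableSpace_le
    have hmm' : θ'.2.1.measurableSpace ≤ θ.2.1.measurableSpace :=
      IsStoppingTime.measurableSpace_mono θ'.2.1 θ.2.1 (fun ω => WithTop.coe_le_coe.2 (hle ω))
    set G : {p : {τ : Ω → ℝ // IsStoppingTime F (fun ω => (τ ω : WithTop ℝ)) ∧ ∀ ω, τ ω ∈ Set.Icc 0 T} // θ.1 ≤ p.1} → Ω → ℝ := fun p => μ[φ p.1 | θ.2.1.measurableSpace] with hG_def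
    haveI : Nonempty {p : {τ : Ω → ℝ // IsStoppingTime F (fun ω => (τ ω : WithTop ℝ)) ∧ ∀ ω, τ ω ∈ Set.Icc 0 T} // θ.1 ≤ p.1} := ⟨⟨θ, le_rfl⟩⟩
    set f : {p : {τ : Ω → ℝ // IsStoppingTime F (fun ω => (τ ω : WithTop ℝ)) ∧ ∀ ω, τ ω ∈ Set.Icc 0 T} // θ.1 ≤ p.1} → ℝ := fun p => ∫ ω, φ p.1 ω ∂μ with hf_def
    have hGint : ∀ p, Integrable (G p) μ := fun p => integrable_condExp
    have hGf : ∀ p, ∫ ω, G p ω ∂μ = f p := fun p => integral_condExp hm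
    have hGv : ∀ p, G p ≤ᵐ[μ] v θ := fun p => hvub θ p.1 p.2
    have hbdd : BddAbove (Set.range f) := by
      refine ⟨∫ ω, v θ ω ∂μ, ?_⟩
      rintro x ⟨p, rfl⟩
      rw [← hGf p]
      exact integral_mono_ae (hGint p) (hvint θ) (hGv p)
    set c : ℝ := ⨆ p, f p with hc_def
    have ht : ∀ n : ℕ, ∃ p, c - 1 / (n + 1) < f p := by
      intro n
      refine exists_lt_of_lt_ciSup ?_
      have : (0:ℝ) < 1 / (n + 1) := by positivity
      linarith
    choose t htlt using ht
    have hfc : ∀ p, f p ≤ c := fun p => le_ciSup hbdd p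
    have key' : ∀ p q : {p : {τ : Ω → ℝ // IsStoppingTime F (fun ω => (τ ω : WithTop ℝ)) ∧ ∀ ω, τ ω ∈ Set.Icc 0 T} // θ.1 ≤ p.1}, ∃ r : {p : {τ : Ω → ℝ // IsStoppingTime F (fun ω => (τ ω : WithTop ℝ)) ∧ ∀ ω, τ ω ∈ Set.Icc 0 T} // θ.1 ≤ p.1},
        (fun ω => max (G p ω) (G q ω)) =ᵐ[μ] G r := by
      intro p q
      obtain ⟨ρ, hρ, h⟩ := key θ p.1 q.1 p.2 q.2
      exact ⟨⟨ρ, hρ⟩, h⟩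
    choose pair hpair using key'
    set σ : ℕ → {p : {τ : Ω → ℝ // IsStoppingTime F (fun ω => (τ ω : WithTop ℝ)) ∧ ∀ ω, τ ω ∈ Set.Icc 0 T} // θ.1 ≤ p.1} :=
      fun n => Nat.rec (t 0) (fun k ih => pair ih (t (k + 1))) n with hσ_def
    have hσs : ∀ n, σ (n + 1) = pair (σ n) (t (n + 1)) := fun n => rfl
    have hmax_int : ∀ p q : {p : {τ : Ω → ℝ // IsStoppingTime F (fun ω => (τ ω : WithTop ℝ)) ∧ ∀ ω, τ ω ∈ Set.Icc 0 T} // θ.1 ≤ p.1},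
        Integrable (fun ω => max (G p ω) (G q ω)) μ := by
      intro p q
      have := (hGint p).sup (hGint q)
      simpa [Pi.sup_def] using this
    have hmono : ∀ n, G (σ n) ≤ᵐ[μ] G (σ (n + 1)) := by
      intro n
      filter_upwards [hpair (σ n) (t (n + 1))] with ω hω
      rw [hσs n, ← hω]
      exact le_max_left _ _
    have hInt_ge : ∀ n : ℕ, c - 1 / (n + 1) ≤ ∫ ω, G (σ n) ω ∂μ := by
      intro n
      have hf' : f (t n) ≤ ∫ ω, G (σ n) ω ∂μ := by
        cases n with
        | zero => exact (hGf (t 0)).ge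
        | succ k =>
          have e : ∫ ω, max (G (σ k) ω) (G (t (k + 1)) ω) ∂μ = ∫ ω, G (σ (k + 1)) ω ∂μ := by
            rw [hσs k]
            exact integral_congr_ae (hpair (σ k) (t (k + 1)))
          have h1 : ∫ ω, G (t (k + 1)) ω ∂μ ≤ ∫ ω, max (G (σ k) ω) (G (t (k + 1)) ω) ∂μ :=
            integral_mono_ae (hGint _) (hmax_int _ _) (Eventually.of_forall fun ω => le_max_right _ _)
          rw [← hGf (t (k + 1))]
          exact h1.trans e.le
      exact (htlt n).le.trans hf'
    have hIle : ∀ n, ∫ ω, G (σ n) ω ∂μ ≤ c := fun n => (hGf (σ n)) ▸ hfc (σ n)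
    have hbd_ae : ∀ᵐ ω ∂μ, ∀ n, G (σ n) ω ≤ v θ ω := ae_all_iff.2 fun n => hGv (σ n)
    have hmono_ae : ∀ᵐ ω ∂μ, ∀ n, G (σ n) ω ≤ G (σ (n + 1)) ω := ae_all_iff.2 hmono
    set w : Ω → ℝ := fun ω => ⨆ n, G (σ n) ω with hw_def
    have hw_meas : StronglyMeasurable[θ.2.1.measurableSpace] w := by
      have : Measurable[θ.2.1.measurableSpace] w :=
        Measurable.iSup fun n => (stronglyMeasurable_condExp (f := φ (σ n).1)).measurable
      exact this.stronglyMeasurable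
    have hGw : ∀ᵐ ω ∂μ, ∀ n, G (σ n) ω ≤ w ω := by
      filter_upwards [hbd_ae] with ω hω n
      exact le_ciSup ⟨v θ ω, by rintro x ⟨k, rfl⟩; exact hω k⟩ n
    have hw_le_v : w ≤ᵐ[μ] v θ := by
      filter_upwards [hbd_ae] with ω hω
      exact ciSup_le fun n => hω n
    have h_tendsto : ∀ᵐ ω ∂μ, Tendsto (fun n => G (σ n) ω) atTop (𝓝 (w ω)) := by
      filter_upwards [hbd_ae, hmono_ae] with ω h1 h2
      exact tendsto_atTop_ciSup (monotone_nat_of_le_succ h2)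
        ⟨v θ ω, by rintro x ⟨k, rfl⟩; exact h1 k⟩
    have hw_int : Integrable w μ := by
      refine Integrable.mono' ((hvint θ).abs.add (hGint (σ 0)).abs)
        ((hw_meas.mono hm).aestronglyMeasurable) ?_
      filter_upwards [hw_le_v, hGw] with ω h1 h2
      rw [Real.norm_eq_abs, abs_le]
      constructor
      · have := h2 0
        have h3 : -|G (σ 0) ω| ≤ G (σ 0) ω := neg_abs_le _
        have h4 : (0:ℝ) ≤ |v θ ω| := abs_nonneg _
        simp only [Pi.add_apply, Pi.abs_apply]
        linarith
      · have h3 : v θ ω ≤ |v θ ω| := le_abs_self _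
        have h4 : (0:ℝ) ≤ |G (σ 0) ω| := abs_nonneg _
        simp only [Pi.add_apply, Pi.abs_apply]
        linarith
    -- `w` is an a.e. upper bound of all `E[φ(τ)|F_θ]`, hence `v θ ≤ w` a.e.
    have hub : ∀ τ : {τ : Ω → ℝ // IsStoppingTime F (fun ω => (τ ω : WithTop ℝ)) ∧ ∀ ω, τ ω ∈ Set.Icc 0 T}, θ.1 ≤ τ.1 → μ[φ τ | θ.2.1.measurableSpace] ≤ᵐ[μ] w := by
      intro τ hτ
      set p : {p : {τ : Ω → ℝ // IsStoppingTime F (fun ω => (τ ω : WithTop ℝ)) ∧ ∀ ω, τ ω ∈ Set.Icc 0 T} // θ.1 ≤ p.1} := ⟨τ, hτ⟩ with hp_def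
      have hpos_int : Integrable (fun ω => max (G p ω - w ω) 0) μ :=
        ((hGint p).sub hw_int).pos_part
      have hpos : ∀ n : ℕ, ∫ ω, max (G p ω - w ω) 0 ∂μ ≤ 1 / (n + 1) := by
        intro n
        have e1 : ∫ ω, max (G p ω) (G (σ n) ω) ∂μ ≤ c := by
          rw [integral_congr_ae (hpair p (σ n)), hGf]
          exact hfc _
        have e3 : ∫ ω, (max (G p ω) (G (σ n) ω) - G (σ n) ω) ∂μ ≤ 1 / (n + 1) := by
          rw [integral_sub (hmax_int p (σ n)) (hGint (σ n))]
          have := hInt_ge n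
          linarith
        refine le_trans (integral_mono_ae hpos_int ((hmax_int p (σ n)).sub (hGint (σ n))) ?_) e3
        filter_upwards [hGw] with ω hω
        refine max_le ?_ ?_
        · exact le_trans (sub_le_sub_left (hω n) _)
            (sub_le_sub_right (le_max_left _ _) _)
        · exact sub_nonneg.mpr (le_max_right _ _)
      have h0 : ∫ ω, max (G p ω - w ω) 0 ∂μ ≤ 0 :=
        ge_of_tendsto' tendsto_one_div_add_atTop_nhds_zero_nat hpos
      have hz : ∫ ω, max (G p ω - w ω) 0 ∂μ = 0 :=
        le_antisymm h0 (integral_nonneg fun ω => le_max_right _ _)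
      have := (integral_eq_zero_iff_of_nonneg_ae
        (Eventually.of_forall fun ω => le_max_right _ _) hpos_int).mp hz
      filter_upwards [this] with ω hω
      simp only [Pi.zero_apply] at hω
      have h1 : G p ω - w ω ≤ max (G p ω - w ω) 0 := le_max_left _ _
      have h2 : G p ω ≤ w ω := by linarith
      exact h2
    have hveq : v θ =ᵐ[μ] w := (hvlub θ w hw_meas hub).antisymm hw_le_v
    -- set-integral comparison over `F_θ'`-sets
    have hsets : ∀ s : Set Ω, MeasurableSet[θ'.2.1.measurableSpace] s →
        ∫ ω in s, v θ ω ∂μ ≤ ∫ ω in s, v θ' ω ∂μ := by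
      intro s hs
      have hsm2 : MeasurableSet[θ.2.1.measurableSpace] s := hmm' s hs
      have hres : ∀ n, Integrable (G (σ n)) (μ.restrict s) :=
        fun n => (hGint (σ n)).integrableOn
      have hwres : Integrable w (μ.restrict s) := hw_int.integrableOn
      have htend : Tendsto (fun n => ∫ ω in s, G (σ n) ω ∂μ) atTop (𝓝 (∫ ω in s, w ω ∂μ)) :=
        integral_tendsto_of_tendsto_of_monotone hres hwres
          (ae_restrict_of_ae (hmono_ae.mono fun ω h => monotone_nat_of_le_succ h))
          (ae_restrict_of_ae h_tendsto)
      have hle' : ∀ n, ∫ ω in s, G (σ n) ω ∂μ ≤ ∫ ω in s, v θ' ω ∂μ := by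
        intro n
        have e1 : ∫ ω in s, G (σ n) ω ∂μ = ∫ ω in s, φ (σ n).1 ω ∂μ :=
          setIntegral_condExp hm (hφint (σ n).1) hsm2
        have e2 : ∫ ω in s, (μ[φ (σ n).1 | θ'.2.1.measurableSpace]) ω ∂μ = ∫ ω in s, φ (σ n).1 ω ∂μ :=
          setIntegral_condExp hm' (hφint (σ n).1) hs
        rw [e1, ← e2]
        have hr1 : Integrable (μ[φ (σ n).1 | θ'.2.1.measurableSpace]) (μ.restrict s) :=
          integrable_condExp.integrableOn
        have hr2 : Integrable (v θ') (μ.restrict s) := (hvint θ').integrableOn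
        exact integral_mono_ae hr1 hr2
          (ae_restrict_of_ae (hvub θ' (σ n).1 ((hle).trans (σ n).2)))
      have hfinal : ∫ ω in s, w ω ∂μ ≤ ∫ ω in s, v θ' ω ∂μ :=
        le_of_tendsto htend (Eventually.of_forall hle')
      calc ∫ ω in s, v θ ω ∂μ = ∫ ω in s, w ω ∂μ :=
            integral_congr_ae (ae_restrict_of_ae hveq)
        _ ≤ ∫ ω in s, v θ' ω ∂μ := hfinal
    -- conclude via the trimmed measure
    have htrim : μ[v θ | θ'.2.1.measurableSpace] ≤ᵐ[μ.trim hm'] v θ' := by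
      have hi1 : Integrable (μ[v θ | θ'.2.1.measurableSpace]) (μ.trim hm') :=
        Integrable.trim hm' integrable_condExp stronglyMeasurable_condExp
      have hi2 : Integrable (v θ') (μ.trim hm') :=
        Integrable.trim hm' (hvint θ') (hvmeas θ')
      refine ae_le_of_forall_setIntegral_le hi1 hi2 ?_
      intro s hs _
      rw [← setIntegral_trim hm' stronglyMeasurable_condExp hs,
        ← setIntegral_trim hm' (hvmeas θ') hs,
        setIntegral_condExp hm' (hvint θ) hs]
      exact hsets s hs
    exact ae_le_of_ae_le_trim htrim
  refine ⟨hsm, ?_, ?_⟩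
  · intro θ
    have h := hvub θ θ le_rfl
    rwa [condExp_of_stronglyMeasurable θ.2.1.measurableSpace_le (hφmeas θ) (hφint θ)] at h
  · intro ψ hψm hψi hψsm hψdom θ
    refine hvlub θ (ψ θ) (hψm θ) ?_
    intro τ hτ
    calc μ[φ τ | θ.2.1.measurableSpace] ≤ᵐ[μ] μ[ψ τ | θ.2.1.measurableSpace] :=
          condExp_mono (hφint τ) (hψi τ) (hψdom τ)
      _ ≤ᵐ[μ] ψ θ := hψsm τ θ hτ
end

section
/- Let J and J' be nonnegative supermartingale families (indexed by stopping times) satisfying J = R(J' + ξ) and J' = R(J − ζ), where R denotes the Snell envelope family operator and ξ, ζ are admissible integrable families with ξ(T) = ζ(T) = 0. If J(0) < +∞ a.s., then Y := J − J' is well-defined and satisfies ξ(θ) ≤ Y(θ) ≤ ζ(θ) almost surely, for every stopping time θ. -/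
open MeasureTheory
open scoped ENNReal

variable {Ω : Type*} {mΩ : MeasurableSpace Ω}

/-- `J` is a (nonnegative, `ℝ≥0∞`-valued) supermartingale family indexed by
`[0,T]`-valued stopping times: for `θ' ≤ θ` and every `F_{θ'}`-measurable set `A`,
`∫_A J(θ) ≤ ∫_A J(θ')`. -/
def SupermartingaleFam {F : Filtration ℝ mΩ} {T : ℝ} (μ : Measure Ω)
    (J : {τ : Ω → ℝ // IsStoppingTime F (fun ω => (τ ω : WithTop ℝ)) ∧ ∀ ω, τ ω ∈ Set.Icc 0 T} → Ω → ℝ≥0∞) : Prop :=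
  (∀ θ, Measurable[θ.2.1.measurableSpace] (J θ)) ∧
  ∀ θ θ', θ'.1 ≤ θ.1 → ∀ A : Set Ω, MeasurableSet[θ'.2.1.measurableSpace] A →
    ∫⁻ ω in A, J θ ω ∂μ ≤ ∫⁻ ω in A, J θ' ω ∂μ

/-- If `J = R(J' + ξ)` and `J' = R(J − ζ)` (Snell envelopes, i.e. smallest dominating
supermartingale families) with `ξ(T) = ζ(T) = 0` and `J(0) < ∞` a.s., then
`Y = J − J'` is well-defined (a.s. finite) and satisfies `ξ ≤ Y ≤ ζ`. -/
theorem stmt_9 {μ : Measure Ω} [IsProbabilityMeasure μ]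
    {F : Filtration ℝ mΩ} {T : ℝ} (hT : 0 ≤ T)
    (ξ ζ : {τ : Ω → ℝ // IsStoppingTime F (fun ω => (τ ω : WithTop ℝ)) ∧ ∀ ω, τ ω ∈ Set.Icc 0 T} → Ω → ℝ)
    (J J' : {τ : Ω → ℝ // IsStoppingTime F (fun ω => (τ ω : WithTop ℝ)) ∧ ∀ ω, τ ω ∈ Set.Icc 0 T} → Ω → ℝ≥0∞)
    (hξmeas : ∀ θ, StronglyMeasurable[θ.2.1.measurableSpace] (ξ θ))
    (hζmeas : ∀ θ, StronglyMeasurable[θ.2.1.measurableSpace] (ζ θ))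
    (hξint : ∀ θ, Integrable (ξ θ) μ) (hζint : ∀ θ, Integrable (ζ θ) μ)
    (θT θ0 : {τ : Ω → ℝ // IsStoppingTime F (fun ω => (τ ω : WithTop ℝ)) ∧ ∀ ω, τ ω ∈ Set.Icc 0 T})
    (hθT : θT.1 = fun _ => T) (hθ0 : θ0.1 = fun _ => 0)
    (hξT : ξ θT =ᵐ[μ] 0) (hζT : ζ θT =ᵐ[μ] 0)
    -- `J`, `J'` are supermartingale families
    (hJ : SupermartingaleFam μ J) (hJ' : SupermartingaleFam μ J')
    -- `J` dominates `J' + ξ` and `J'` dominates `J − ζ`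
    (hJdom : ∀ θ, ∀ᵐ ω ∂μ, (J' θ ω : EReal) + (ξ θ ω : EReal) ≤ (J θ ω : EReal))
    (hJ'dom : ∀ θ, ∀ᵐ ω ∂μ, (J θ ω : EReal) - (ζ θ ω : EReal) ≤ (J' θ ω : EReal))
    -- `J` and `J'` are the smallest such families (Snell envelope property)
    (hJmin : ∀ ψ, SupermartingaleFam μ ψ →
      (∀ θ, ∀ᵐ ω ∂μ, (J' θ ω : EReal) + (ξ θ ω : EReal) ≤ (ψ θ ω : EReal)) →
      ∀ θ, ∀ᵐ ω ∂μ, J θ ω ≤ ψ θ ω)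
    (hJ'min : ∀ ψ, SupermartingaleFam μ ψ →
      (∀ θ, ∀ᵐ ω ∂μ, (J θ ω : EReal) - (ζ θ ω : EReal) ≤ (ψ θ ω : EReal)) →
      ∀ θ, ∀ᵐ ω ∂μ, J' θ ω ≤ ψ θ ω)
    -- `J(0) < +∞` a.s.
    (hJ0 : ∀ᵐ ω ∂μ, J θ0 ω < ⊤) :
    ∀ θ, ∀ᵐ ω ∂μ, J θ ω ≠ ⊤ ∧ J' θ ω ≠ ⊤ ∧
      ξ θ ω ≤ (J θ ω).toReal - (J' θ ω).toReal ∧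
      (J θ ω).toReal - (J' θ ω).toReal ≤ ζ θ ω := by
  intro θ
  -- measurability of stopping-time σ-algebras relative to mΩ
  have hle : ∀ (σ : {τ : Ω → ℝ // IsStoppingTime F (fun ω => (τ ω : WithTop ℝ)) ∧ ∀ ω, τ ω ∈ Set.Icc 0 T}),
      σ.2.1.measurableSpace ≤ mΩ := fun σ =>
    σ.2.1.measurableSpace_le_of_le (n := T) fun ω => WithTop.coe_le_coe.mpr (σ.2.2 ω).2
  -- θ0 ≤ θ
  have h0θ : θ0.1 ≤ θ.1 := by
    rw [hθ0]; exact fun ω => (θ.2.2 ω).1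
  -- J θ < ⊤ a.e.
  have hJmeas : Measurable (J θ) := (hJ.1 θ).mono (hle θ) le_rfl
  have hJ0meas : Measurable[θ0.2.1.measurableSpace] (J θ0) := hJ.1 θ0
  have hJfin : ∀ᵐ ω ∂μ, J θ ω < ⊤ := by
    have hAn : ∀ n : ℕ, ∀ᵐ ω ∂μ, J θ0 ω ≤ n → J θ ω < ⊤ := by
      intro n
      set A : Set Ω := {ω | J θ0 ω ≤ (n : ℝ≥0∞)} with hA
      have hAmeas : MeasurableSet[θ0.2.1.measurableSpace] A :=
        hJ0meas measurableSet_Iic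
      have hint : ∫⁻ ω in A, J θ ω ∂μ ≠ ⊤ := by
        refine ne_top_of_le_ne_top ?_ (hJ.2 θ θ0 h0θ A hAmeas)
        have hb : ∫⁻ ω in A, J θ0 ω ∂μ ≤ (n : ℝ≥0∞) * μ A := by
          calc ∫⁻ ω in A, J θ0 ω ∂μ ≤ ∫⁻ _ in A, (n : ℝ≥0∞) ∂μ :=
                setLIntegral_mono measurable_const fun ω hω => hω
            _ = (n : ℝ≥0∞) * μ A := by simp [mul_comm]
        exact ne_top_of_le_ne_top (ENNReal.mul_ne_top (by simp) (measure_ne_top μ A)) hb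
      have := ae_lt_top hJmeas hint
      rw [ae_restrict_iff' (hle θ0 A hAmeas)] at this
      exact this
    rw [← ae_all_iff] at hAn
    filter_upwards [hJ0, hAn] with ω hω hω'
    obtain ⟨n, hn⟩ := ENNReal.exists_nat_gt hω.ne
    exact hω' n hn.le
  -- combine with dominations
  filter_upwards [hJfin, hJdom θ, hJ'dom θ] with ω hωfin hdom hdom'
  have hJne : J θ ω ≠ ⊤ := hωfin.ne
  have hJ'ne : J' θ ω ≠ ⊤ := by
    intro h
    rw [h, EReal.coe_ennreal_top, EReal.top_add_of_ne_bot (EReal.coe_ne_bot _)] at hdom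
    exact hJne (EReal.coe_ennreal_eq_top_iff.mp (top_le_iff.mp hdom))
  have hJc : (J θ ω : EReal) = ((J θ ω).toReal : EReal) := by
    rw [← EReal.toReal_coe_ennreal,
      EReal.coe_toReal (by simp [hJne]) (by simp)]
  have hJ'c : (J' θ ω : EReal) = ((J' θ ω).toReal : EReal) := by
    rw [← EReal.toReal_coe_ennreal,
      EReal.coe_toReal (by simp [hJ'ne]) (by simp)]
  rw [hJc, hJ'c] at hdom hdom'
  refine ⟨hJne, hJ'ne, ?_, ?_⟩
  · have : ((J' θ ω).toReal + ξ θ ω : ℝ) ≤ ((J θ ω).toReal : ℝ) := by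
      exact_mod_cast hdom
    linarith
  · have : ((J θ ω).toReal - ζ θ ω : ℝ) ≤ ((J' θ ω).toReal : ℝ) := by
      exact_mod_cast hdom'
    linarith
end
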